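/- Let R₀ > 0 and 0 ≤ φₛ < 1/2, and define F : ℝ² ∖ {0} → ℝ by F(v) = ‖v‖²/(R₀(‖v‖ + φₛ·v₁)). Then for every v ≠ 0, the fundamental form of F at v, i.e., the symmetric bilinear form g_v(u,w) = (1/2)·D²(F²)(v)(u,w) given by one half of the second Fréchet derivative of F² at v, is positive definite: g_v(u,u) > 0 for every u ≠ 0. -/

import Mathlib

lemma slope_keyPos (p y q z φ s : ℝ) (hs : 0 < s) (hs2 : s^2 = p^2 + y^2)
    (hφ0 : 0 ≤ φ) (hφ1 : φ < 1/2) (hu : 0 < q^2 + z^2) :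
    0 < 2*s*(p*q+y*z)^2*(φ*p) + 8*(p*q+y*z)^2*(φ*p)^2 + 2*s^4*(q^2+z^2)
      + 6*s^3*(q^2+z^2)*(φ*p) + 4*s^2*(q^2+z^2)*(φ*p)^2
      - 4*s^3*(p*q+y*z)*(φ*q) - 16*s^2*(p*q+y*z)*(φ*p)*(φ*q)
      + 6*s^4*(φ*q)^2 := by
  have hp1 : -s ≤ p := by nlinarith [sq_nonneg (s+p)]
  have hid : 2*s*(p*q+y*z)^2*(φ*p) + 8*(p*q+y*z)^2*(φ*p)^2 + 2*s^4*(q^2+z^2)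
      + 6*s^3*(q^2+z^2)*(φ*p) + 4*s^2*(q^2+z^2)*(φ*p)^2
      - 4*s^3*(p*q+y*z)*(φ*q) - 16*s^2*(p*q+y*z)*(φ*p)*(φ*q)
      + 6*s^4*(φ*q)^2
      = 2*((s+φ*p)*(p*q+y*z)+φ*y*(p*z-y*q))^2
        + (2*s^2+6*φ*p*s+4*φ^2*s^2)*(p*z-y*q)^2 := by
    linear_combination (2*z^2*s^2 + 2*q^2*s^2 + 6*q^2*φ^2*s^2 - 4*y*q*z*φ*s + 2*y^2*q^2*φ^2
      + 6*p*z^2*φ*s + 2*p*q^2*φ*s - 8*p*y*q*z*φ^2 - 6*p^2*q^2*φ^2) * hs2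
  rw [hid]
  have hQ2 : 0 < 2*s^2+6*φ*p*s+4*φ^2*s^2 := by
    nlinarith [mul_pos hs hs, mul_nonneg hφ0 (sub_nonneg.2 hp1), sq_nonneg (1-2*φ),
      mul_nonneg (mul_nonneg hφ0 hs.le) (sub_nonneg.2 hp1)]
  rcases eq_or_ne (p*z-y*q) 0 with hD | hD
  · have hB : (p*q+y*z)^2 = s^2*(q^2+z^2) := by
      linear_combination -(q^2+z^2)*hs2 - (p*z-y*q)*hD
    have hT : 0 < s + φ*p := by nlinarith [mul_nonneg hφ0 (sub_nonneg.2 hp1)]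
    have hBne : (p*q+y*z) ≠ 0 := by
      intro h
      rw [h] at hB
      nlinarith [mul_pos (mul_pos hs hs) hu]
    have h1 : ((s+φ*p)*(p*q+y*z)+φ*y*(p*z-y*q)) ≠ 0 := by
      rw [hD]; simp [hT.ne', hBne]
    have h2 := sq_pos_of_ne_zero h1
    have h3 := mul_nonneg hQ2.le (sq_nonneg (p*z-y*q))
    linarith
  · have h1 := mul_pos hQ2 (sq_pos_of_ne_zero hD)
    have h2 := sq_nonneg ((s+φ*p)*(p*q+y*z)+φ*y*(p*z-y*q))
    linarith

lemma slope_hasDerivAt_G (s B C p q φ R₀ : ℝ) (hR₀ : R₀ ≠ 0) (t : ℝ)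
    (hat : 0 < s^2 + 2*B*t + C*t^2)
    (hct : 0 < Real.sqrt (s^2 + 2*B*t + C*t^2) + φ*(p + q*t)) :
    HasDerivAt (fun t => (s^2 + 2*B*t + C*t^2)^2
        / (R₀^2 * (Real.sqrt (s^2 + 2*B*t + C*t^2) + φ*(p + q*t))^2))
      ((2*(s^2 + 2*B*t + C*t^2)*(2*B + 2*C*t)*(Real.sqrt (s^2 + 2*B*t + C*t^2) + φ*(p + q*t))
        - 2*(s^2 + 2*B*t + C*t^2)^2
          *((2*B + 2*C*t)/(2*Real.sqrt (s^2 + 2*B*t + C*t^2)) + φ*q))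
       / (R₀^2 * (Real.sqrt (s^2 + 2*B*t + C*t^2) + φ*(p + q*t))^3)) t := by
  have hrt : 0 < Real.sqrt (s^2 + 2*B*t + C*t^2) := Real.sqrt_pos.2 hat
  have ha : HasDerivAt (fun t : ℝ => s^2 + 2*B*t + C*t^2) (2*B + 2*C*t) t := by
    have h2 : HasDerivAt (fun t : ℝ => 2*B*t) (2*B) t := by
      simpa using (hasDerivAt_id t).const_mul (2*B)
    have h3 : HasDerivAt (fun t : ℝ => C*t^2) (C*(2*t)) t := by
      simpa using (hasDerivAt_pow 2 t).const_mul C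
    have := (h2.const_add (s^2)).add h3
    exact this.congr_deriv (by ring)
  have hr : HasDerivAt (fun t : ℝ => Real.sqrt (s^2 + 2*B*t + C*t^2))
      ((2*B + 2*C*t)/(2*Real.sqrt (s^2 + 2*B*t + C*t^2))) t := ha.sqrt hat.ne'
  have hc : HasDerivAt (fun t : ℝ => Real.sqrt (s^2 + 2*B*t + C*t^2) + φ*(p + q*t))
      ((2*B + 2*C*t)/(2*Real.sqrt (s^2 + 2*B*t + C*t^2)) + φ*q) t := by
    have h4 : HasDerivAt (fun t : ℝ => φ*(p + q*t)) (φ*q) t := by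
      have : HasDerivAt (fun t : ℝ => p + q*t) q t := by
        simpa using ((hasDerivAt_id t).const_mul q).const_add p
      simpa using this.const_mul φ
    exact hr.add h4
  have hnum : HasDerivAt (fun t : ℝ => (s^2 + 2*B*t + C*t^2)^2)
      (2*(s^2 + 2*B*t + C*t^2)*(2*B + 2*C*t)) t := by
    have := ha.pow 2
    exact this.congr_deriv (by ring)
  have hden : HasDerivAt
      (fun t : ℝ => R₀^2 * (Real.sqrt (s^2 + 2*B*t + C*t^2) + φ*(p + q*t))^2)
      (R₀^2 * (2*(Real.sqrt (s^2 + 2*B*t + C*t^2) + φ*(p + q*t))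
        *((2*B + 2*C*t)/(2*Real.sqrt (s^2 + 2*B*t + C*t^2)) + φ*q))) t := by
    have := (hc.pow 2).const_mul (R₀^2)
    exact this.congr_deriv (by ring)
  have hdenne : R₀^2 * (Real.sqrt (s^2 + 2*B*t + C*t^2) + φ*(p + q*t))^2 ≠ 0 := by
    positivity
  have := hnum.div hden hdenne
  refine this.congr_deriv ?_
  field_simp

lemma slope_hasDerivAt_G1 (s B C p q φ R₀ : ℝ) (hR₀ : R₀ ≠ 0) (hs : 0 < s)
    (hc0 : 0 < s + φ*p) :
    HasDerivAt (fun t =>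
      (2*(s^2 + 2*B*t + C*t^2)*(2*B + 2*C*t)*(Real.sqrt (s^2 + 2*B*t + C*t^2) + φ*(p + q*t))
        - 2*(s^2 + 2*B*t + C*t^2)^2
          *((2*B + 2*C*t)/(2*Real.sqrt (s^2 + 2*B*t + C*t^2)) + φ*q))
       / (R₀^2 * (Real.sqrt (s^2 + 2*B*t + C*t^2) + φ*(p + q*t))^3))
      ((2*s*B^2*(φ*p) + 8*B^2*(φ*p)^2 + 2*s^4*C + 6*s^3*C*(φ*p) + 4*s^2*C*(φ*p)^2
        - 4*s^3*B*(φ*q) - 16*s^2*B*(φ*p)*(φ*q) + 6*s^4*(φ*q)^2) / (R₀^2*(s + φ*p)^4)) 0 := by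
  have hat : (0:ℝ) < s^2 + 2*B*0 + C*0^2 := by norm_num; positivity
  have hsq0 : Real.sqrt (s^2 + 2*B*0 + C*0^2) = s := by
    norm_num [Real.sqrt_sq hs.le]
  have hct : 0 < Real.sqrt (s^2 + 2*B*0 + C*0^2) + φ*(p + q*0) := by
    rw [hsq0]; norm_num [hc0]
  have hrt : 0 < Real.sqrt (s^2 + 2*B*0 + C*0^2) := Real.sqrt_pos.2 hat
  set t : ℝ := 0 with ht
  have ha : HasDerivAt (fun t : ℝ => s^2 + 2*B*t + C*t^2) (2*B + 2*C*t) t := by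
    have h2 : HasDerivAt (fun t : ℝ => 2*B*t) (2*B) t := by
      simpa using (hasDerivAt_id t).const_mul (2*B)
    have h3 : HasDerivAt (fun t : ℝ => C*t^2) (C*(2*t)) t := by
      simpa using (hasDerivAt_pow 2 t).const_mul C
    have := (h2.const_add (s^2)).add h3
    exact this.congr_deriv (by ring)
  have hr : HasDerivAt (fun t : ℝ => Real.sqrt (s^2 + 2*B*t + C*t^2))
      ((2*B + 2*C*t)/(2*Real.sqrt (s^2 + 2*B*t + C*t^2))) t := ha.sqrt hat.ne'
  have hc : HasDerivAt (fun t : ℝ => Real.sqrt (s^2 + 2*B*t + C*t^2) + φ*(p + q*t))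
      ((2*B + 2*C*t)/(2*Real.sqrt (s^2 + 2*B*t + C*t^2)) + φ*q) t := by
    have h4 : HasDerivAt (fun t : ℝ => φ*(p + q*t)) (φ*q) t := by
      have : HasDerivAt (fun t : ℝ => p + q*t) q t := by
        simpa using ((hasDerivAt_id t).const_mul q).const_add p
      simpa using this.const_mul φ
    exact hr.add h4
  have hlin : HasDerivAt (fun t : ℝ => 2*B + 2*C*t) (2*C) t := by
    simpa using ((hasDerivAt_id t).const_mul (2*C)).const_add (2*B)
  have h2r : HasDerivAt (fun t : ℝ => 2*Real.sqrt (s^2 + 2*B*t + C*t^2))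
      (2*((2*B + 2*C*t)/(2*Real.sqrt (s^2 + 2*B*t + C*t^2)))) t := hr.const_mul 2
  have h2rne : 2*Real.sqrt (s^2 + 2*B*t + C*t^2) ≠ 0 := by positivity
  have hw : HasDerivAt
      (fun t : ℝ => (2*B + 2*C*t)/(2*Real.sqrt (s^2 + 2*B*t + C*t^2)) + φ*q)
      ((2*C*(2*Real.sqrt (s^2 + 2*B*t + C*t^2))
        - (2*B + 2*C*t)*(2*((2*B + 2*C*t)/(2*Real.sqrt (s^2 + 2*B*t + C*t^2)))))
       /(2*Real.sqrt (s^2 + 2*B*t + C*t^2))^2) t :=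
    (hlin.div h2r h2rne).add_const (φ*q)
  have h2a : HasDerivAt (fun t : ℝ => 2*(s^2 + 2*B*t + C*t^2)) (2*(2*B + 2*C*t)) t :=
    ha.const_mul 2
  have hprod1 : HasDerivAt
      (fun t : ℝ => 2*(s^2 + 2*B*t + C*t^2)*(2*B + 2*C*t)
        *(Real.sqrt (s^2 + 2*B*t + C*t^2) + φ*(p + q*t)))
      ((2*(2*B + 2*C*t)*(2*B + 2*C*t) + 2*(s^2 + 2*B*t + C*t^2)*(2*C))
        *(Real.sqrt (s^2 + 2*B*t + C*t^2) + φ*(p + q*t))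
       + 2*(s^2 + 2*B*t + C*t^2)*(2*B + 2*C*t)
        *((2*B + 2*C*t)/(2*Real.sqrt (s^2 + 2*B*t + C*t^2)) + φ*q)) t := by
    have := (h2a.mul hlin).mul hc
    exact this.congr_deriv (by simp only [Pi.mul_apply])
  have hsq : HasDerivAt (fun t : ℝ => 2*(s^2 + 2*B*t + C*t^2)^2)
      (2*(2*(s^2 + 2*B*t + C*t^2)*(2*B + 2*C*t))) t := by
    have := (ha.pow 2).const_mul 2
    exact this.congr_deriv (by ring)
  have hprod2 : HasDerivAt
      (fun t : ℝ => 2*(s^2 + 2*B*t + C*t^2)^2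
        *((2*B + 2*C*t)/(2*Real.sqrt (s^2 + 2*B*t + C*t^2)) + φ*q))
      (2*(2*(s^2 + 2*B*t + C*t^2)*(2*B + 2*C*t))
        *((2*B + 2*C*t)/(2*Real.sqrt (s^2 + 2*B*t + C*t^2)) + φ*q)
       + 2*(s^2 + 2*B*t + C*t^2)^2
        *((2*C*(2*Real.sqrt (s^2 + 2*B*t + C*t^2))
          - (2*B + 2*C*t)*(2*((2*B + 2*C*t)/(2*Real.sqrt (s^2 + 2*B*t + C*t^2)))))
         /(2*Real.sqrt (s^2 + 2*B*t + C*t^2))^2)) t := hsq.mul hw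
  have hN := hprod1.sub hprod2
  have hden : HasDerivAt
      (fun t : ℝ => R₀^2 * (Real.sqrt (s^2 + 2*B*t + C*t^2) + φ*(p + q*t))^3)
      (R₀^2 * (3*(Real.sqrt (s^2 + 2*B*t + C*t^2) + φ*(p + q*t))^2
        *((2*B + 2*C*t)/(2*Real.sqrt (s^2 + 2*B*t + C*t^2)) + φ*q))) t := by
    have := (hc.pow 3).const_mul (R₀^2)
    exact this.congr_deriv (by ring)
  have hdenne : R₀^2 * (Real.sqrt (s^2 + 2*B*t + C*t^2) + φ*(p + q*t))^3 ≠ 0 := by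
    positivity
  have hfinal := hN.div hden hdenne
  refine hfinal.congr_deriv ?_
  rw [ht] at *
  rw [hsq0] at *
  have hcne : s + φ*p ≠ 0 := hc0.ne'
  norm_num
  rw [Real.sqrt_sq hs.le]
  have hsne : s ≠ 0 := hs.ne'
  have hR0' : R₀ ≠ 0 := hR₀
  field_simp
  ring

/-- For `R₀ > 0` and `0 ≤ φₛ < 1/2`, the fundamental form of the
Matsumoto-type slope metric `F(v) = ‖v‖²/(R₀(‖v‖ + φₛ v₁))`, i.e. one half of the
second Fréchet derivative of `F²` at any `v ≠ 0`, is positive definite. -/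
theorem slopeMetric_fundamentalForm_posDef (R₀ φₛ : ℝ) (hR₀ : 0 < R₀)
    (hφ₀ : 0 ≤ φₛ) (hφ₁ : φₛ < 1 / 2)
    (F : EuclideanSpace ℝ (Fin 2) → ℝ)
    (hF : ∀ v : EuclideanSpace ℝ (Fin 2), v ≠ 0 →
      F v = ‖v‖ ^ 2 / (R₀ * (‖v‖ + φₛ * v 0))) :
    ∀ v : EuclideanSpace ℝ (Fin 2), v ≠ 0 →
      ∀ u : EuclideanSpace ℝ (Fin 2), u ≠ 0 →
        0 < (1 / 2) * iteratedFDeriv ℝ 2 (fun x => F x ^ 2) v ![u, u] := by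
  intro v hv u hu
  set f : EuclideanSpace ℝ (Fin 2) → ℝ := fun x => F x ^ 2 with hf
  -- basic quantities
  set s : ℝ := ‖v‖ with hsdef
  have hs : 0 < s := norm_pos_iff.2 hv
  set p : ℝ := v 0 with hpdef
  set y : ℝ := v 1 with hydef
  set q : ℝ := u 0 with hqdef
  set z : ℝ := u 1 with hzdef
  have hcoord : ∀ x : EuclideanSpace ℝ (Fin 2), ‖x‖^2 = (x 0)^2 + (x 1)^2 := by
    intro x
    rw [EuclideanSpace.norm_eq, Real.sq_sqrt (by positivity)]
    simp [Fin.sum_univ_two, sq_abs]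
  have hs2 : s^2 = p^2 + y^2 := hcoord v
  have hC2 : ‖u‖^2 = q^2 + z^2 := hcoord u
  have hC : 0 < q^2 + z^2 := by
    rw [← hC2]; exact pow_pos (norm_pos_iff.2 hu) 2
  have hBinner : (inner ℝ v u : ℝ) = p*q + y*z := by
    simp [PiLp.inner_apply, Fin.sum_univ_two, RCLike.inner_apply, hpdef, hqdef, hydef, hzdef]
    ring
  -- positivity of the denominator at any nonzero point
  have hdenpos : ∀ x : EuclideanSpace ℝ (Fin 2), x ≠ 0 → 0 < ‖x‖ + φₛ * x 0 := by
    intro x hx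
    have h1 : (x 0)^2 ≤ ‖x‖^2 := by
      rw [hcoord x]; nlinarith [sq_nonneg (x 1)]
    have h3 : 0 < ‖x‖ := norm_pos_iff.2 hx
    have hx0ge : -‖x‖ ≤ x 0 := by nlinarith
    have h5 : φₛ * (-‖x‖) ≤ φₛ * x 0 := mul_le_mul_of_nonneg_left hx0ge hφ₀
    nlinarith
  have hc0 : 0 < s + φₛ * p := hdenpos v hv
  have hR₀ne : R₀ ≠ 0 := hR₀.ne'
  -- f is C² at every nonzero point
  have hCD : ∀ x : EuclideanSpace ℝ (Fin 2), x ≠ 0 → ContDiffAt ℝ 2 f x := by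
    intro x hx
    have hev : ∀ᶠ y in nhds x, y ≠ 0 :=
      isOpen_compl_singleton.eventually_mem (by simpa using hx)
    have heq : f =ᶠ[nhds x]
        fun y => (‖y‖ ^ 2 / (R₀ * (‖y‖ + φₛ * y 0)))^2 := by
      filter_upwards [hev] with y hy
      rw [hf]; simp only []; rw [hF y hy]
    refine ContDiffAt.congr_of_eventuallyEq ?_ heq
    have hnorm : ContDiffAt ℝ 2 (fun y : EuclideanSpace ℝ (Fin 2) => ‖y‖) x :=
      contDiffAt_norm ℝ hx
    have hx0 : ContDiffAt ℝ 2 (fun y : EuclideanSpace ℝ (Fin 2) => y 0) x :=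
      (EuclideanSpace.proj (0 : Fin 2) : EuclideanSpace ℝ (Fin 2) →L[ℝ] ℝ).contDiff.contDiffAt
    have hden : ContDiffAt ℝ 2
        (fun y : EuclideanSpace ℝ (Fin 2) => R₀ * (‖y‖ + φₛ * y 0)) x :=
      (contDiffAt_const.mul ((hnorm.add (contDiffAt_const.mul hx0))))
    have hdenne : R₀ * (‖x‖ + φₛ * x 0) ≠ 0 := by
      have := hdenpos x hx; positivity
    exact (((hnorm.pow 2).div hden hdenne).pow 2)
  -- the line through v in direction u
  set γ : ℝ → EuclideanSpace ℝ (Fin 2) := fun t => v + t • u with hγdef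
  have hγ0 : γ 0 = v := by simp [hγdef]
  have hγcont : Continuous γ := by
    apply Continuous.add continuous_const
    exact continuous_id.smul continuous_const
  have hγne : ∀ᶠ t in nhds (0:ℝ), γ t ≠ 0 := by
    have : ∀ᶠ x in nhds (γ 0), x ≠ 0 := by
      rw [hγ0]
      exact isOpen_compl_singleton.eventually_mem (by simpa using hv)
    exact hγcont.continuousAt.eventually this
  have hγd : ∀ t : ℝ, HasDerivAt γ u t := by
    intro t
    have : HasDerivAt (fun t : ℝ => t • u) ((1:ℝ) • u) t := (hasDerivAt_id t).smul_const u
    simpa [hγdef] using this.const_add v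
  -- coordinates along the line
  have hγ00 : ∀ t : ℝ, γ t 0 = p + q * t := by
    intro t
    simp [hγdef, hpdef, hqdef, mul_comm]
  have hγnormsq : ∀ t : ℝ, ‖γ t‖^2 = s^2 + 2*(p*q+y*z)*t + (q^2+z^2)*t^2 := by
    intro t
    rw [hγdef]
    simp only []
    rw [norm_add_sq_real, real_inner_smul_right, norm_smul, hBinner, ← hC2]
    simp [mul_pow, sq_abs]
    ring
  have hγnorm : ∀ t : ℝ, ‖γ t‖ = Real.sqrt (s^2 + 2*(p*q+y*z)*t + (q^2+z^2)*t^2) := by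
    intro t
    rw [← hγnormsq t, Real.sqrt_sq (norm_nonneg _)]
  -- abbreviations matching the auxiliary lemmas
  set B : ℝ := p*q + y*z with hBdef
  set C : ℝ := q^2 + z^2 with hCdef
  set G : ℝ → ℝ := fun t => (s^2 + 2*B*t + C*t^2)^2
      / (R₀^2 * (Real.sqrt (s^2 + 2*B*t + C*t^2) + φₛ*(p + q*t))^2) with hGdef
  set G1 : ℝ → ℝ := fun t =>
      (2*(s^2 + 2*B*t + C*t^2)*(2*B + 2*C*t)*(Real.sqrt (s^2 + 2*B*t + C*t^2) + φₛ*(p + q*t))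
        - 2*(s^2 + 2*B*t + C*t^2)^2
          *((2*B + 2*C*t)/(2*Real.sqrt (s^2 + 2*B*t + C*t^2)) + φₛ*q))
       / (R₀^2 * (Real.sqrt (s^2 + 2*B*t + C*t^2) + φₛ*(p + q*t))^3) with hG1def
  -- g agrees with G near 0
  have hgG : (fun t => f (γ t)) =ᶠ[nhds (0:ℝ)] G := by
    filter_upwards [hγne] with t ht
    have hd := hdenpos (γ t) ht
    rw [hf]
    simp only []
    rw [hF (γ t) ht, hGdef]
    simp only []
    rw [hγ00 t, hγnormsq t, hγnorm t]
    rw [div_pow, mul_pow]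
  -- a t > 0 and c t > 0 eventually
  have hacont : Continuous (fun t : ℝ => s^2 + 2*B*t + C*t^2) :=
    (continuous_const.add (continuous_const.mul continuous_id)).add
      (continuous_const.mul (continuous_pow 2))
  have hapos : ∀ᶠ t in nhds (0:ℝ), 0 < s^2 + 2*B*t + C*t^2 := by
    have h0 : (0:ℝ) < s^2 + 2*B*0 + C*0^2 := by norm_num; positivity
    exact hacont.continuousAt.eventually_mem (isOpen_lt continuous_const continuous_id |>.mem_nhds (by simpa using h0))
  have hccont : Continuous (fun t : ℝ => Real.sqrt (s^2 + 2*B*t + C*t^2) + φₛ*(p + q*t)) := by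
    apply Continuous.add
    · exact (Real.continuous_sqrt).comp hacont
    · exact continuous_const.mul (continuous_const.add (continuous_const.mul continuous_id))
  have hcpos : ∀ᶠ t in nhds (0:ℝ), 0 < Real.sqrt (s^2 + 2*B*t + C*t^2) + φₛ*(p + q*t) := by
    have h0 : (0:ℝ) < Real.sqrt (s^2 + 2*B*0 + C*0^2) + φₛ*(p + q*0) := by
      have : Real.sqrt (s^2 + 2*B*0 + C*0^2) = s := by
        norm_num [Real.sqrt_sq hs.le]
      rw [this]; simpa using hc0
    exact hccont.continuousAt.eventually_mem (isOpen_lt continuous_const continuous_id |>.mem_nhds (by simpa using h0))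
  -- G has derivative G1 near 0
  have hGd : ∀ᶠ t in nhds (0:ℝ), HasDerivAt G (G1 t) t := by
    filter_upwards [hapos, hcpos] with t ha hc
    exact slope_hasDerivAt_G s B C p q φₛ R₀ hR₀ne t ha hc
  -- f∘γ has derivative (fderiv f (γ t)) u near 0
  have hgd : ∀ᶠ t in nhds (0:ℝ), HasDerivAt (fun t => f (γ t)) (fderiv ℝ f (γ t) u) t := by
    filter_upwards [hγne] with t ht
    have hdiff : DifferentiableAt ℝ f (γ t) :=
      (hCD (γ t) ht).differentiableAt (by norm_num)
    exact hdiff.hasFDerivAt.comp_hasDerivAt t (hγd t)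
  -- hence (fderiv f (γ ·)) u = G1 near 0
  have hmatch : (fun t => fderiv ℝ f (γ t) u) =ᶠ[nhds (0:ℝ)] G1 := by
    have hGnbhd : ∀ᶠ t in nhds (0:ℝ), (fun t => f (γ t)) =ᶠ[nhds t] G :=
      hgG.eventually_nhds
    filter_upwards [hgd, hGd, hGnbhd] with t h1 h2 h3
    have h1' : HasDerivAt G (fderiv ℝ f (γ t) u) t :=
      h1.congr_of_eventuallyEq h3.symm
    exact h1'.unique h2
  -- the second derivative along the line
  have hfd2 : DifferentiableAt ℝ (fderiv ℝ f) v :=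
    ((hCD v hv).fderiv_right (m := 1) (by norm_num)).differentiableAt (by norm_num)
  have hcomp : HasDerivAt (fun t => fderiv ℝ f (γ t)) (fderiv ℝ (fderiv ℝ f) v u) 0 := by
    have hfd2' : HasFDerivAt (fderiv ℝ f) (fderiv ℝ (fderiv ℝ f) v) (γ 0) := by
      rw [hγ0]; exact hfd2.hasFDerivAt
    exact hfd2'.comp_hasDerivAt 0 (hγd 0)
  have hB2 : HasDerivAt (fun t => fderiv ℝ f (γ t) u)
      (fderiv ℝ (fderiv ℝ f) v u u) 0 := by
    have := hcomp.clm_apply (hasDerivAt_const (0:ℝ) u)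
    simpa using this
  have hG1deriv : HasDerivAt G1 (fderiv ℝ (fderiv ℝ f) v u u) 0 :=
    hB2.congr_of_eventuallyEq hmatch.symm
  -- compare with the explicit second derivative
  have hG1explicit := slope_hasDerivAt_G1 s B C p q φₛ R₀ hR₀ne hs hc0
  have hval : fderiv ℝ (fderiv ℝ f) v u u =
      (2*s*B^2*(φₛ*p) + 8*B^2*(φₛ*p)^2 + 2*s^4*C + 6*s^3*C*(φₛ*p) + 4*s^2*C*(φₛ*p)^2
        - 4*s^3*B*(φₛ*q) - 16*s^2*B*(φₛ*p)*(φₛ*q) + 6*s^4*(φₛ*q)^2) / (R₀^2*(s + φₛ*p)^4) :=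
    hG1deriv.unique hG1explicit
  -- conclude
  have h2app : iteratedFDeriv ℝ 2 f v ![u, u] = fderiv ℝ (fderiv ℝ f) v u u := by
    rw [iteratedFDeriv_two_apply]
    norm_num
  have hPpos := slope_keyPos p y q z φₛ s hs hs2 hφ₀ hφ₁ hC
  have hPpos' : 0 < (2*s*B^2*(φₛ*p) + 8*B^2*(φₛ*p)^2 + 2*s^4*C + 6*s^3*C*(φₛ*p)
      + 4*s^2*C*(φₛ*p)^2 - 4*s^3*B*(φₛ*q) - 16*s^2*B*(φₛ*p)*(φₛ*q) + 6*s^4*(φₛ*q)^2) := by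
    rw [hBdef, hCdef]
    convert hPpos using 1 <;> ring
  have hfinalpos : 0 < fderiv ℝ (fderiv ℝ f) v u u := by
    rw [hval]
    apply div_pos hPpos'
    positivity
  show 0 < (1/2) * iteratedFDeriv ℝ 2 f v ![u, u]
  rw [h2app]
  linarith
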